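/- Let K ∈ ℝ, D > 0, λ ∈ ℝ and a > 1, and set s = 1 − 1/a. Suppose f : ℝ → ℝ is twice continuously differentiable on [−D, D], satisfies f(−D) = f(D) = 0, satisfies f(x) > 0 for all x ∈ (−D, D), and satisfies f''(x) − K·x·f'(x) = −(λ − K)·f(x) for all x ∈ [−D, D]. Define u : (−D, D) → ℝ by u(x) = f(x)^{a/2}. Then 4s(1−s)·∫_{−D}^{D} u'(x)² dx = (λ − K·s)·∫_{−D}^{D} u(x)² dx. -/

import Mathlib

open Real Set intervalIntegral MeasureTheory

lemma aux_gron {p q C : ℝ} (hpq : p < q) {W W' : ℝ → ℝ}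
    (hWc : ContinuousOn W (Icc p q))
    (hWd : ∀ x ∈ Ioo p q, HasDerivAt W (W' x) x)
    (hW' : ∀ x ∈ Ioo p q, |W' x| ≤ C * W x)
    (hW0 : ∀ x ∈ Icc p q, 0 ≤ W x)
    (h0 : W p = 0 ∨ W q = 0) : ∀ x ∈ Icc p q, W x = 0 := by
  rcases h0 with h0 | h0
  · set φ : ℝ → ℝ := fun x => W x * Real.exp (-C * x) with hφ
    have hdφ : ∀ x ∈ Ioo p q, HasDerivAt φ
        (W' x * Real.exp (-C * x) + W x * (Real.exp (-C * x) * (-C))) x := by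
      intro x hx
      exact (hWd x hx).mul (((hasDerivAt_id x).const_mul (-C)).exp.congr_deriv (by simp))
    have hmono : AntitoneOn φ (Icc p q) := by
      refine antitoneOn_of_deriv_nonpos (convex_Icc p q) ?_ ?_ ?_
      · exact hWc.mul (by fun_prop)
      · rw [interior_Icc]
        exact fun x hx => ((hdφ x hx).differentiableAt).differentiableWithinAt
      · rw [interior_Icc]
        intro x hx
        rw [(hdφ x hx).deriv]
        have h1 := (abs_le.1 (hW' x hx)).2
        have h2 : 0 < Real.exp (-C * x) := Real.exp_pos _
        have h3 : 0 ≤ W x := hW0 x (Ioo_subset_Icc_self hx)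
        nlinarith
    intro x hx
    have h4 : φ x ≤ φ p := hmono (left_mem_Icc.2 hpq.le) hx hx.1
    simp only [hφ, h0, zero_mul] at h4
    have h6 : 0 < Real.exp (-C * x) := Real.exp_pos _
    have := hW0 x hx
    nlinarith
  · set φ : ℝ → ℝ := fun x => W x * Real.exp (C * x) with hφ
    have hdφ : ∀ x ∈ Ioo p q, HasDerivAt φ
        (W' x * Real.exp (C * x) + W x * (Real.exp (C * x) * C)) x := by
      intro x hx
      exact (hWd x hx).mul (((hasDerivAt_id x).const_mul C).exp.congr_deriv (by simp))
    have hmono : MonotoneOn φ (Icc p q) := by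
      refine monotoneOn_of_deriv_nonneg (convex_Icc p q) ?_ ?_ ?_
      · exact hWc.mul (by fun_prop)
      · rw [interior_Icc]
        exact fun x hx => ((hdφ x hx).differentiableAt).differentiableWithinAt
      · rw [interior_Icc]
        intro x hx
        rw [(hdφ x hx).deriv]
        have h1 := (abs_le.1 (hW' x hx)).1
        have h2 : 0 < Real.exp (C * x) := Real.exp_pos _
        have h3 : 0 ≤ W x := hW0 x (Ioo_subset_Icc_self hx)
        nlinarith
    intro x hx
    have h4 : φ x ≤ φ q := hmono hx (right_mem_Icc.2 hpq.le) hx.2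
    simp only [hφ, h0, zero_mul] at h4
    have h6 : 0 < Real.exp (C * x) := Real.exp_pos _
    have := hW0 x hx
    nlinarith

private lemma aux_sign (K D lam : ℝ) (hD : 0 < D)
    (f : ℝ → ℝ) (hbl : f (-D) = 0) (hbr : f D = 0)
    (hpos : ∀ x ∈ Ioo (-D) D, 0 < f x) (g1 g2 : ℝ → ℝ)
    (hfc : ContinuousOn f (Icc (-D) D))
    (hfd : DifferentiableOn ℝ f (Icc (-D) D))
    (hg1def : g1 = derivWithin f (Icc (-D) D))
    (hg1c : ContinuousOn g1 (Icc (-D) D))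
    (hderiv1 : ∀ x ∈ Ioo (-D) D, HasDerivAt f (g1 x) x)
    (hderiv2 : ∀ x ∈ Ioo (-D) D, HasDerivAt g1 (g2 x) x)
    (heig' : ∀ x ∈ Ioo (-D) D, g2 x = K * x * g1 x - (lam - K) * f x)
    (hf0 : ∀ x ∈ Icc (-D) D, 0 ≤ f x) :
    0 < g1 (-D) ∧ g1 D < 0 := by
  have hDD : -D < D := by linarith
  -- Gronwall setup
  set M : ℝ := |K| * D + |lam - K| with hM
  have hM0 : 0 ≤ M := by positivity
  set C : ℝ := 1 + 3 * M with hC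
  set W : ℝ → ℝ := fun x => f x ^ 2 + g1 x ^ 2 with hW
  set W' : ℝ → ℝ := fun x => 2 * f x ^ 1 * g1 x + 2 * g1 x ^ 1 * g2 x with hW'
  have hWc : ContinuousOn W (Icc (-D) D) := (hfc.pow 2).add (hg1c.pow 2)
  have hWd : ∀ x ∈ Ioo (-D) D, HasDerivAt W (W' x) x := by
    intro x hx
    exact ((hderiv1 x hx).pow 2).add ((hderiv2 x hx).pow 2)
  have hWb : ∀ x ∈ Ioo (-D) D, |W' x| ≤ C * W x := by
    intro x hx
    have hxD : |x| ≤ D := by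
      rw [abs_le]; exact ⟨hx.1.le, hx.2.le⟩
    have hg2b : |g2 x| ≤ M * |f x| + M * |g1 x| := by
      rw [heig' x hx]
      refine (abs_sub _ _).trans ?_
      rw [abs_mul, abs_mul, abs_mul]
      have h1 : |K| * |x| * |g1 x| ≤ |K| * D * |g1 x| :=
        mul_le_mul_of_nonneg_right (mul_le_mul_of_nonneg_left hxD (abs_nonneg K)) (abs_nonneg _)
      have h2 : |K| * D ≤ M := by
        rw [hM]; nlinarith [abs_nonneg (lam - K)]
      have h3 : |lam - K| ≤ M := by
        rw [hM]; nlinarith [abs_nonneg K, abs_nonneg (lam - K)]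
      nlinarith [abs_nonneg (g1 x), abs_nonneg (f x)]
    have h1 : |2 * f x ^ 1 * g1 x| ≤ f x ^ 2 + g1 x ^ 2 := by
      rw [abs_le]
      constructor
      · nlinarith [sq_nonneg (f x + g1 x)]
      · nlinarith [sq_nonneg (f x - g1 x)]
    have h2 : |2 * g1 x ^ 1 * g2 x| ≤ 3 * M * (f x ^ 2 + g1 x ^ 2) := by
      have e1 : |2 * g1 x ^ 1 * g2 x| = 2 * |g1 x| * |g2 x| := by
        rw [abs_mul, abs_mul]; simp [abs_of_nonneg]
      rw [e1]
      nlinarith [sq_nonneg (|f x| - |g1 x|), sq_abs (f x), sq_abs (g1 x),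
        abs_nonneg (g1 x), abs_nonneg (f x), abs_nonneg (g2 x)]
    calc |W' x| ≤ |2 * f x ^ 1 * g1 x| + |2 * g1 x ^ 1 * g2 x| := abs_add_le _ _
      _ ≤ (f x ^ 2 + g1 x ^ 2) + 3 * M * (f x ^ 2 + g1 x ^ 2) := by linarith
      _ = C * W x := by rw [hC, hW]; ring
  have hW0 : ∀ x ∈ Icc (-D) D, 0 ≤ W x := fun x _ => by positivity
  have h0mem : (0:ℝ) ∈ Ioo (-D) D := ⟨by linarith, hD⟩
  constructor
  · -- left: g1 (-D) ≥ 0 and ≠ 0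
    have hge : 0 ≤ g1 (-D) := by
      have hd : HasDerivWithinAt f (g1 (-D)) (Icc (-D) D) (-D) := by
        rw [hg1def]
        exact (hfd (-D) (left_mem_Icc.2 hDD.le)).hasDerivWithinAt
      rw [hasDerivWithinAt_iff_tendsto_slope] at hd
      haveI : (nhdsWithin (-D) (Icc (-D) D \ {-D})).NeBot := by
        refine Filter.NeBot.mono (left_nhdsWithin_Ioo_neBot hDD) (nhdsWithin_mono _ ?_)
        intro x hx
        exact ⟨Ioo_subset_Icc_self hx, fun h => by simp at h; linarith [hx.1, h]⟩
      refine ge_of_tendsto hd ?_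
      filter_upwards [self_mem_nhdsWithin] with x hx
      rcases hx with ⟨hx1, hx2⟩
      have hxD : -D < x := lt_of_le_of_ne hx1.1 (fun h => hx2 (by simp [← h]))
      have : slope f (-D) x = f x / (x + D) := by
        rw [slope_def_field, hbl]; ring_nf
      rw [this]
      exact div_nonneg (hf0 x hx1) (by linarith)
    rcases eq_or_lt_of_le hge with heq | h
    · exfalso
      have hzero := aux_gron hDD hWc hWd hWb hW0
        (Or.inl (by rw [hW]; simp [hbl, ← heq]))
      have := hzero 0 (Ioo_subset_Icc_self h0mem)
      have hf00 := hpos 0 h0mem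
      nlinarith [sq_nonneg (g1 0), show f 0 ^ 2 + g1 0 ^ 2 = 0 from this]
    · exact h
  · have hle : g1 D ≤ 0 := by
      have hd : HasDerivWithinAt f (g1 D) (Icc (-D) D) D := by
        rw [hg1def]
        exact (hfd D (right_mem_Icc.2 hDD.le)).hasDerivWithinAt
      rw [hasDerivWithinAt_iff_tendsto_slope] at hd
      haveI : (nhdsWithin D (Icc (-D) D \ {D})).NeBot := by
        refine Filter.NeBot.mono (right_nhdsWithin_Ioo_neBot hDD) (nhdsWithin_mono _ ?_)
        intro x hx
        exact ⟨Ioo_subset_Icc_self hx, fun h => by simp at h; linarith [hx.2, h]⟩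
      refine le_of_tendsto hd ?_
      filter_upwards [self_mem_nhdsWithin] with x hx
      rcases hx with ⟨hx1, hx2⟩
      have hxD : x < D := lt_of_le_of_ne hx1.2 (fun h => hx2 (by simp [h]))
      have : slope f D x = f x / (x - D) := by
        rw [slope_def_field, hbr]; ring_nf
      rw [this]
      exact div_nonpos_of_nonneg_of_nonpos (hf0 x hx1) (by linarith)
    rcases eq_or_lt_of_le hle with heq | h
    · exfalso
      have hzero := aux_gron hDD hWc hWd hWb hW0
        (Or.inr (by rw [hW]; simp [hbr, heq]))
      have := hzero 0 (Ioo_subset_Icc_self h0mem)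
      have hf00 := hpos 0 h0mem
      nlinarith [sq_nonneg (g1 0), show f 0 ^ 2 + g1 0 ^ 2 = 0 from this]
    · exact h

private lemma aux_low (D : ℝ) (hD : 0 < D) (f g1 : ℝ → ℝ)
    (hbl : f (-D) = 0) (hbr : f D = 0)
    (hfc : ContinuousOn f (Icc (-D) D))
    (hg1c : ContinuousOn g1 (Icc (-D) D))
    (hderiv1 : ∀ x ∈ Ioo (-D) D, HasDerivAt f (g1 x) x)
    (hg1l : 0 < g1 (-D)) (hg1r : g1 D < 0) :
    (∃ δ, 0 < δ ∧ δ ≤ D ∧ ∀ x ∈ Icc (-D) (-D+δ), g1 (-D)/2 * (x + D) ≤ f x) ∧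
    (∃ δ, 0 < δ ∧ δ ≤ D ∧ ∀ x ∈ Icc (D-δ) D, -g1 D/2 * (D - x) ≤ f x) := by
  have hDD : -D < D := by linarith
  constructor
  · have hev : ∀ᶠ x in nhdsWithin (-D) (Icc (-D) D), g1 (-D)/2 < g1 x :=
      (hg1c (-D) (left_mem_Icc.2 hDD.le)).eventually (eventually_gt_nhds (half_lt_self hg1l))
    obtain ⟨ε, hε, hball⟩ := Metric.mem_nhdsWithin_iff.1 hev
    refine ⟨min (ε/2) D, by positivity, min_le_right _ _, ?_⟩
    set δ := min (ε/2) D with hδ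
    have hδD : δ ≤ D := min_le_right _ _
    have hδε : δ < ε := lt_of_le_of_lt (min_le_left _ _) (by linarith)
    have hkey : ∀ x ∈ Icc (-D) (-D+δ), g1 (-D)/2 < g1 x := by
      intro x hx
      refine hball ⟨?_, ?_⟩
      · rw [Metric.mem_ball, Real.dist_eq, abs_sub_comm]
        rw [abs_of_nonpos (by linarith [hx.1] : -D - x ≤ 0)]
        linarith [hx.1, hx.2]
      · exact ⟨hx.1, by linarith [hx.2]⟩
    set φ : ℝ → ℝ := fun x => f x - g1 (-D)/2 * (x + D) with hφ
    have hmono : MonotoneOn φ (Icc (-D) (-D+δ)) := by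
      refine monotoneOn_of_deriv_nonneg (convex_Icc _ _) ?_ ?_ ?_
      · exact (hfc.mono (Icc_subset_Icc_right (by linarith))).sub (by fun_prop)
      · rw [interior_Icc]
        intro x hx
        have hx' : x ∈ Ioo (-D) D := ⟨hx.1, by linarith [hx.2]⟩
        have hlin : HasDerivAt (fun y : ℝ => g1 (-D)/2 * (y + D)) (g1 (-D)/2 * 1) x :=
          ((hasDerivAt_id x).add_const D).const_mul _
        exact (((hderiv1 x hx').sub hlin).differentiableAt).differentiableWithinAt
      · rw [interior_Icc]
        intro x hx
        have hx' : x ∈ Ioo (-D) D := ⟨hx.1, by linarith [hx.2]⟩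
        have hlin : HasDerivAt (fun y : ℝ => g1 (-D)/2 * (y + D)) (g1 (-D)/2 * 1) x :=
          ((hasDerivAt_id x).add_const D).const_mul _
        rw [show deriv φ x = g1 x - g1 (-D)/2 * 1 from ((hderiv1 x hx').sub hlin).deriv]
        have := hkey x (Ioo_subset_Icc_self hx)
        linarith
    intro x hx
    have h1 : φ (-D) ≤ φ x := hmono (left_mem_Icc.2 (by linarith [hx.2, hx.1])) hx hx.1
    simp only [hφ, hbl] at h1
    linarith [h1]
  · have hev : ∀ᶠ x in nhdsWithin D (Icc (-D) D), g1 x < g1 D/2 :=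
      (hg1c D (right_mem_Icc.2 hDD.le)).eventually (eventually_lt_nhds (by linarith))
    obtain ⟨ε, hε, hball⟩ := Metric.mem_nhdsWithin_iff.1 hev
    refine ⟨min (ε/2) D, by positivity, min_le_right _ _, ?_⟩
    set δ := min (ε/2) D with hδ
    have hδD : δ ≤ D := min_le_right _ _
    have hδε : δ < ε := lt_of_le_of_lt (min_le_left _ _) (by linarith)
    have hkey : ∀ x ∈ Icc (D-δ) D, g1 x < g1 D/2 := by
      intro x hx
      refine hball ⟨?_, ?_⟩
      · rw [Metric.mem_ball, Real.dist_eq]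
        rw [abs_of_nonpos (by linarith [hx.2] : x - D ≤ 0)]
        linarith [hx.1, hx.2]
      · exact ⟨by linarith [hx.1], hx.2⟩
    set φ : ℝ → ℝ := fun x => f x + g1 D/2 * (D - x) with hφ
    have hmono : AntitoneOn φ (Icc (D-δ) D) := by
      refine antitoneOn_of_deriv_nonpos (convex_Icc _ _) ?_ ?_ ?_
      · exact (hfc.mono (Icc_subset_Icc_left (by linarith))).add (by fun_prop)
      · rw [interior_Icc]
        intro x hx
        have hx' : x ∈ Ioo (-D) D := ⟨by linarith [hx.1], hx.2⟩
        have hlin : HasDerivAt (fun y : ℝ => g1 D/2 * (D - y)) (g1 D/2 * -1) x :=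
          ((hasDerivAt_id x).const_sub D).const_mul _
        exact (((hderiv1 x hx').add hlin).differentiableAt).differentiableWithinAt
      · rw [interior_Icc]
        intro x hx
        have hx' : x ∈ Ioo (-D) D := ⟨by linarith [hx.1], hx.2⟩
        have hlin : HasDerivAt (fun y : ℝ => g1 D/2 * (D - y)) (g1 D/2 * -1) x :=
          ((hasDerivAt_id x).const_sub D).const_mul _
        rw [show deriv φ x = g1 x + g1 D/2 * -1 from ((hderiv1 x hx').add hlin).deriv]
        have := hkey x (Ioo_subset_Icc_self hx)
        linarith
    intro x hx
    have hδ0 : 0 < δ := lt_min (by linarith) hD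
    have h1 : φ D ≤ φ x := hmono hx (right_mem_Icc.2 (by linarith)) hx.2
    simp only [hφ, hbr] at h1
    linarith [h1]

private lemma aux_intg (D a : ℝ) (hD : 0 < D) (ha : 1 < a) (f g1 : ℝ → ℝ)
    (hfc : ContinuousOn f (Icc (-D) D))
    (hg1c : ContinuousOn g1 (Icc (-D) D))
    (hpos : ∀ x ∈ Ioo (-D) D, 0 < f x) (hbr : f D = 0)
    (hf0 : ∀ x ∈ Icc (-D) D, 0 ≤ f x)
    (δ₁ δ₂ c₁ c₂ : ℝ) (hδ₁ : 0 < δ₁) (hδ₁D : δ₁ ≤ D) (hδ₂ : 0 < δ₂) (hδ₂D : δ₂ ≤ D)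
    (hc₁ : 0 < c₁) (hc₂ : 0 < c₂)
    (hlow₁ : ∀ x ∈ Icc (-D) (-D+δ₁), c₁ * (x + D) ≤ f x)
    (hlow₂ : ∀ x ∈ Icc (D-δ₂) D, c₂ * (D - x) ≤ f x) :
    IntervalIntegrable (fun x => f x ^ (a-2) * g1 x ^ 2) volume (-D) D := by
  have hDD : -D < D := by linarith
  set h : ℝ → ℝ := fun x => f x ^ (a-2) * g1 x ^ 2 with hh
  rcases le_or_gt 2 a with h2a | h2a
  · -- continuous case
    have hco : ContinuousOn h (uIcc (-D) D) := by
      rw [uIcc_of_le hDD.le]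
      exact (hfc.rpow_const (fun x _ => Or.inr (by linarith))).mul (hg1c.pow 2)
    exact hco.intervalIntegrable
  · -- singular case
    have ha2 : a - 2 < 0 := by linarith
    have ha2' : (-1:ℝ) < a - 2 := by linarith
    -- bound for g1^2
    obtain ⟨z, hz, hmax⟩ := isCompact_Icc.exists_isMaxOn (α := ℝ)
      ⟨-D, left_mem_Icc.2 hDD.le⟩ (hg1c.pow 2)
    set M := g1 z ^ 2 with hM
    have hM0 : 0 ≤ M := sq_nonneg _
    have hMb : ∀ x ∈ Icc (-D) D, g1 x ^ 2 ≤ M := fun x hx => hmax hx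
    -- left piece
    have hleft : IntervalIntegrable h volume (-D) (-D + δ₁) := by
      rw [intervalIntegrable_iff_integrableOn_Ioc_of_le (by linarith)]
      have hsub : Ioc (-D) (-D + δ₁) ⊆ Icc (-D) D := fun x hx =>
        ⟨hx.1.le, by linarith [hx.2]⟩
      have hsub' : Ioc (-D) (-D + δ₁) ⊆ Ioo (-D) D := fun x hx =>
        ⟨hx.1, by linarith [hx.2]⟩
      -- comparison function
      set g : ℝ → ℝ := fun x => (M * c₁ ^ (a-2)) * (x + D) ^ (a-2) with hg
      have hgint : IntegrableOn g (Ioc (-D) (-D + δ₁)) volume := by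
        rw [← intervalIntegrable_iff_integrableOn_Ioc_of_le (by linarith)]
        have := ((intervalIntegrable_rpow' ha2' (a := 0) (b := δ₁)).comp_add_right D).const_mul
          (M * c₁ ^ (a-2))
        rw [zero_sub] at this
        have e : δ₁ - D = -D + δ₁ := by ring
        rwa [e] at this
      refine hgint.integrable.mono ?_ ?_
      · refine (ContinuousOn.aestronglyMeasurable ?_ measurableSet_Ioc)
        exact ((hfc.mono hsub).rpow_const
          (fun x hx => Or.inl (ne_of_gt (hpos x (hsub' hx))))).mul ((hg1c.mono hsub).pow 2)
      · rw [ae_restrict_iff' measurableSet_Ioc]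
        refine Filter.Eventually.of_forall (fun x hx => ?_)
        have hfx : 0 < f x := hpos x (hsub' hx)
        have hxD : 0 < x + D := by linarith [hx.1]
        have hb1 : f x ^ (a-2) ≤ (c₁ * (x + D)) ^ (a-2) :=
          rpow_le_rpow_of_nonpos (by positivity) (hlow₁ x ⟨hx.1.le, hx.2⟩) ha2.le
        have hb2 : g1 x ^ 2 ≤ M := hMb x (hsub hx)
        have hnn : 0 ≤ h x := mul_nonneg (rpow_nonneg hfx.le _) (sq_nonneg _)
        have hgx : g x = (M * c₁ ^ (a-2)) * (x + D) ^ (a-2) := rfl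
        have hgnn : 0 ≤ g x := by
          rw [hgx]
          positivity
        rw [Real.norm_of_nonneg hnn, Real.norm_of_nonneg hgnn, hgx]
        calc h x ≤ (c₁ * (x + D)) ^ (a-2) * M :=
              mul_le_mul hb1 hb2 (sq_nonneg _) (rpow_nonneg (by positivity) _)
          _ = (M * c₁ ^ (a-2)) * (x + D) ^ (a-2) := by
              rw [Real.mul_rpow hc₁.le hxD.le]; ring
    -- right piece
    have hright : IntervalIntegrable h volume (D - δ₂) D := by
      rw [intervalIntegrable_iff_integrableOn_Ioc_of_le (by linarith)]
      have hsub : Ioc (D - δ₂) D ⊆ Icc (-D) D := fun x hx =>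
        ⟨by linarith [hx.1], hx.2⟩
      have hsub' : Ioo (D - δ₂) D ⊆ Ioo (-D) D := fun x hx =>
        ⟨by linarith [hx.1], hx.2⟩
      set g : ℝ → ℝ := fun x => (M * c₂ ^ (a-2)) * (D - x) ^ (a-2) with hg
      have hgint : IntegrableOn g (Ioc (D - δ₂) D) volume := by
        rw [← intervalIntegrable_iff_integrableOn_Ioc_of_le (by linarith)]
        have := (((intervalIntegrable_rpow' ha2' (a := δ₂) (b := 0)).comp_sub_left D).const_mul
          (M * c₂ ^ (a-2)))
        rw [sub_zero] at this
        exact this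
      refine hgint.integrable.mono ?_ ?_
      · rw [Measure.restrict_congr_set Ioo_ae_eq_Ioc.symm]
        refine (ContinuousOn.aestronglyMeasurable ?_ measurableSet_Ioo)
        exact ((hfc.mono (Ioo_subset_Icc_self.trans (Icc_subset_Icc_left (by linarith)))).rpow_const
          (fun x hx => Or.inl (ne_of_gt (hpos x (hsub' hx))))).mul
          ((hg1c.mono (Ioo_subset_Icc_self.trans (Icc_subset_Icc_left (by linarith)))).pow 2)
      · rw [ae_restrict_iff' measurableSet_Ioc]
        refine Filter.Eventually.of_forall (fun x hx => ?_)
        have hgx : g x = (M * c₂ ^ (a-2)) * (D - x) ^ (a-2) := rfl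
        rcases eq_or_lt_of_le hx.2 with heq | hlt
        · -- x = D
          have e1 : h x = 0 := by
            show f x ^ (a-2) * g1 x ^ 2 = 0
            rw [heq, hbr, Real.zero_rpow (show a-2 ≠ 0 by linarith), zero_mul]
          have e2 : g x = 0 := by
            rw [hgx, heq, sub_self, Real.zero_rpow (show a-2 ≠ 0 by linarith), mul_zero]
          rw [e1, e2]
        · have hfx : 0 < f x := hpos x (hsub' ⟨hx.1, hlt⟩)
          have hxD : 0 < D - x := by linarith
          have hb1 : f x ^ (a-2) ≤ (c₂ * (D - x)) ^ (a-2) :=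
            rpow_le_rpow_of_nonpos (by positivity) (hlow₂ x ⟨hx.1.le, hx.2⟩) ha2.le
          have hb2 : g1 x ^ 2 ≤ M := hMb x (hsub hx)
          have hnn : 0 ≤ h x := mul_nonneg (rpow_nonneg hfx.le _) (sq_nonneg _)
          have hgnn : 0 ≤ g x := by rw [hgx]; positivity
          rw [Real.norm_of_nonneg hnn, Real.norm_of_nonneg hgnn, hgx]
          calc h x ≤ (c₂ * (D - x)) ^ (a-2) * M :=
                mul_le_mul hb1 hb2 (sq_nonneg _) (rpow_nonneg (by positivity) _)
            _ = (M * c₂ ^ (a-2)) * (D - x) ^ (a-2) := by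
                rw [Real.mul_rpow hc₂.le hxD.le]; ring
    -- middle piece
    have hmid : IntervalIntegrable h volume (-D + δ₁) (D - δ₂) := by
      have hsub : uIcc (-D + δ₁) (D - δ₂) ⊆ Ioo (-D) D := by
        apply Set.OrdConnected.uIcc_subset Set.ordConnected_Ioo
        · exact ⟨by linarith, by linarith⟩
        · exact ⟨by linarith, by linarith⟩
      refine ContinuousOn.intervalIntegrable ?_
      have hsub' : uIcc (-D + δ₁) (D - δ₂) ⊆ Icc (-D) D := hsub.trans Ioo_subset_Icc_self
      exact ((hfc.mono hsub').rpow_const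
        (fun x hx => Or.inl (ne_of_gt (hpos x (hsub hx))))).mul ((hg1c.mono hsub').pow 2)
    have := (hleft.trans hmid).trans hright
    exact this

private lemma aux_main (K D lam a s : ℝ) (hD : 0 < D) (ha : 1 < a) (hs : s = 1 - 1 / a)
    (f g1 g2 : ℝ → ℝ)
    (hbl : f (-D) = 0) (hbr : f D = 0)
    (hpos : ∀ x ∈ Ioo (-D) D, 0 < f x)
    (hfc : ContinuousOn f (Icc (-D) D))
    (hg1c : ContinuousOn g1 (Icc (-D) D))
    (hg2c : ContinuousOn g2 (Icc (-D) D))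
    (hderiv1 : ∀ x ∈ Ioo (-D) D, HasDerivAt f (g1 x) x)
    (hderiv2 : ∀ x ∈ Ioo (-D) D, HasDerivAt g1 (g2 x) x)
    (heig' : ∀ x ∈ Ioo (-D) D, g2 x = K * x * g1 x - (lam - K) * f x)
    (hint : IntervalIntegrable (fun x => f x ^ (a-2) * g1 x ^ 2) volume (-D) D) :
    (a-1) * ∫ x in (-D)..D, f x ^ (a-2) * g1 x ^ 2
      = (lam - K*s) * ∫ x in (-D)..D, f x ^ a := by
  have hDD : -D < D := by linarith
  have ham : a ≠ 0 := by linarith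
  set h : ℝ → ℝ := fun x => f x ^ (a-2) * g1 x ^ 2 with hh
  set fa : ℝ → ℝ := fun x => f x ^ a with hfa
  set B : ℝ → ℝ := fun x => f x ^ (a-1) * g1 x - K/a * (x * f x ^ a) with hB
  -- integrability of fa
  have hfaint : IntervalIntegrable fa volume (-D) D := by
    have hco : ContinuousOn fa (uIcc (-D) D) := by
      rw [uIcc_of_le hDD.le]
      exact hfc.rpow_const (fun x _ => Or.inr (by linarith))
    exact hco.intervalIntegrable
  -- continuity of B
  have hBc : ContinuousOn B (Icc (-D) D) := by
    refine ContinuousOn.sub ?_ ?_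
    · exact (hfc.rpow_const (fun x _ => Or.inr (by linarith))).mul hg1c
    · exact continuousOn_const.mul (continuousOn_id.mul
        (hfc.rpow_const (fun x _ => Or.inr (by linarith))))
  have hBl : B (-D) = 0 := by
    rw [hB]
    simp only [hbl, Real.zero_rpow (show a - 1 ≠ 0 by linarith),
      Real.zero_rpow ham, zero_mul, mul_zero, sub_zero]
  have hBr : B D = 0 := by
    rw [hB]
    simp only [hbr, Real.zero_rpow (show a - 1 ≠ 0 by linarith),
      Real.zero_rpow ham, zero_mul, mul_zero, sub_zero]
  -- the FTC identity on interior subintervals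
  have key : ∀ c ∈ Ioo (-D) D, ∀ d ∈ Ioo (-D) D,
      (a-1) * (∫ x in c..d, h x) - (lam - K*s) * (∫ x in c..d, fa x) = B d - B c := by
    intro c hc d hd
    have hJ : uIcc c d ⊆ Ioo (-D) D := Set.OrdConnected.uIcc_subset Set.ordConnected_Ioo hc hd
    have hJ' : uIcc c d ⊆ Icc (-D) D := hJ.trans Ioo_subset_Icc_self
    have hBd : ∀ x ∈ uIcc c d, HasDerivAt B ((a-1) * h x - (lam - K*s) * fa x) x := by
      intro x hx
      have hxI : x ∈ Ioo (-D) D := hJ hx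
      have hF : 0 < f x := hpos x hxI
      have h1 : HasDerivAt (fun y => f y ^ (a-1)) (g1 x * (a-1) * f x ^ (a-1-1)) x :=
        (hderiv1 x hxI).rpow_const (Or.inl hF.ne')
      have h2 : HasDerivAt (fun y => f y ^ a) (g1 x * a * f x ^ (a-1)) x :=
        (hderiv1 x hxI).rpow_const (Or.inl hF.ne')
      have h3 : HasDerivAt (fun y => y * f y ^ a)
          (1 * f x ^ a + x * (g1 x * a * f x ^ (a-1))) x :=
        (hasDerivAt_id x).mul h2
      have hBd' : HasDerivAt B
          ((g1 x * (a-1) * f x ^ (a-1-1) * g1 x + f x ^ (a-1) * g2 x)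
            - K/a * (1 * f x ^ a + x * (g1 x * a * f x ^ (a-1)))) x :=
        (h1.mul (hderiv2 x hxI)).sub (h3.const_mul (K/a))
      convert hBd' using 1
      have e1 : f x ^ (a-1-1) = f x ^ (a-2) := by rw [show a-1-1 = a-2 by ring]
      have e2 : f x ^ (a-1) = f x ^ (a-2) * f x := by
        rw [← Real.rpow_add_one hF.ne' (a-2)]; congr 1; ring
      have e3 : f x ^ a = f x ^ (a-2) * f x * f x := by
        rw [← e2, ← Real.rpow_add_one hF.ne' (a-1)]; congr 1; ring
      rw [hh, hfa]
      simp only []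
      rw [heig' x hxI, e1, e2, e3, hs]
      field_simp
      ring
    have hhco : ContinuousOn h (uIcc c d) := by
      exact ((hfc.mono hJ').rpow_const
        (fun x hx => Or.inl (ne_of_gt (hpos x (hJ hx))))).mul ((hg1c.mono hJ').pow 2)
    have hfaco : ContinuousOn fa (uIcc c d) :=
      (hfc.mono hJ').rpow_const (fun x _ => Or.inr (by linarith))
    have hB'int : IntervalIntegrable (fun x => (a-1) * h x - (lam - K*s) * fa x) volume c d :=
      ((hhco.const_smul (a-1)).sub (hfaco.const_smul (lam - K*s))).intervalIntegrable
    have hftc := intervalIntegral.integral_eq_sub_of_hasDerivAt hBd hB'int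
    rw [intervalIntegral.integral_sub ((hhco.intervalIntegrable).const_mul _)
      ((hfaco.intervalIntegrable).const_mul _),
      intervalIntegral.integral_const_mul, intervalIntegral.integral_const_mul] at hftc
    linarith [hftc]
  -- limits
  have h0mem : (0:ℝ) ∈ Ioo (-D) D := ⟨by linarith, hD⟩
  have hintL : IntervalIntegrable h volume (-D) 0 := by
    apply hint.mono_set
    rw [uIcc_of_le hDD.le, uIcc_of_le (by linarith : -D ≤ (0:ℝ))]
    exact Icc_subset_Icc le_rfl hD.le
  have hintR : IntervalIntegrable h volume 0 D := by
    apply hint.mono_set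
    rw [uIcc_of_le hDD.le, uIcc_of_le hD.le]
    exact Icc_subset_Icc (by linarith) le_rfl
  have hfaL : IntervalIntegrable fa volume (-D) 0 := by
    apply hfaint.mono_set
    rw [uIcc_of_le hDD.le, uIcc_of_le (by linarith : -D ≤ (0:ℝ))]
    exact Icc_subset_Icc le_rfl hD.le
  have hfaR : IntervalIntegrable fa volume 0 D := by
    apply hfaint.mono_set
    rw [uIcc_of_le hDD.le, uIcc_of_le hD.le]
    exact Icc_subset_Icc (by linarith) le_rfl
  haveI hne1 : (nhdsWithin (-D) (Ioo (-D) 0)).NeBot :=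
    left_nhdsWithin_Ioo_neBot (by linarith)
  haveI hne2 : (nhdsWithin D (Ioo 0 D)).NeBot :=
    right_nhdsWithin_Ioo_neBot hD
  -- left limit
  have hLeft : (a-1) * (∫ x in (-D)..0, h x) - (lam - K*s) * (∫ x in (-D)..0, fa x) = B 0 := by
    have hIoosub : Ioo (-D) (0:ℝ) ⊆ uIcc (-D) 0 := by
      rw [uIcc_of_le (by linarith : -D ≤ (0:ℝ))]
      exact Ioo_subset_Icc_self
    have t1 : Filter.Tendsto (fun c => ∫ x in c..0, h x) (nhdsWithin (-D) (Ioo (-D) 0))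
        (nhds (∫ x in (-D)..0, h x)) := by
      have hio : IntegrableOn h (uIcc (-D) 0) volume := by
        rw [uIcc_of_le (by linarith : -D ≤ (0:ℝ)), integrableOn_Icc_iff_integrableOn_Ioc]
        exact (intervalIntegrable_iff_integrableOn_Ioc_of_le (by linarith)).1 hintL
      exact ((continuousOn_primitive_interval_left hio) (-D) left_mem_uIcc).mono hIoosub
    have t2 : Filter.Tendsto (fun c => ∫ x in c..0, fa x) (nhdsWithin (-D) (Ioo (-D) 0))
        (nhds (∫ x in (-D)..0, fa x)) := by
      have hio : IntegrableOn fa (uIcc (-D) 0) volume := by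
        rw [uIcc_of_le (by linarith : -D ≤ (0:ℝ)), integrableOn_Icc_iff_integrableOn_Ioc]
        exact (intervalIntegrable_iff_integrableOn_Ioc_of_le (by linarith)).1 hfaL
      exact ((continuousOn_primitive_interval_left hio) (-D) left_mem_uIcc).mono hIoosub
    have t3 : Filter.Tendsto B (nhdsWithin (-D) (Ioo (-D) 0)) (nhds (B (-D))) :=
      (hBc (-D) (left_mem_Icc.2 hDD.le)).mono
        (fun x hx => ⟨hx.1.le, by linarith [hx.2]⟩)
    have tA : Filter.Tendsto (fun c => (a-1) * (∫ x in c..0, h x)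
        - (lam - K*s) * (∫ x in c..0, fa x)) (nhdsWithin (-D) (Ioo (-D) 0))
        (nhds ((a-1) * (∫ x in (-D)..0, h x) - (lam - K*s) * (∫ x in (-D)..0, fa x))) :=
      ((t1.const_mul _).sub (t2.const_mul _))
    have tB : Filter.Tendsto (fun c => (a-1) * (∫ x in c..0, h x)
        - (lam - K*s) * (∫ x in c..0, fa x)) (nhdsWithin (-D) (Ioo (-D) 0))
        (nhds (B 0 - B (-D))) := by
      refine Filter.Tendsto.congr' ?_ ((tendsto_const_nhds).sub t3)
      filter_upwards [self_mem_nhdsWithin] with c hc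
      exact (key c ⟨hc.1, by linarith [hc.2]⟩ 0 h0mem).symm
    have := tendsto_nhds_unique tA tB
    rw [hBl, sub_zero] at this
    exact this
  -- right limit
  have hRight : (a-1) * (∫ x in (0:ℝ)..D, h x) - (lam - K*s) * (∫ x in (0:ℝ)..D, fa x)
      = - B 0 := by
    have hIoosub : Ioo (0:ℝ) D ⊆ uIcc 0 D := by
      rw [uIcc_of_le hD.le]; exact Ioo_subset_Icc_self
    have t1 : Filter.Tendsto (fun d => ∫ x in (0:ℝ)..d, h x) (nhdsWithin D (Ioo 0 D))
        (nhds (∫ x in (0:ℝ)..D, h x)) := by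
      have hio : IntegrableOn h (uIcc (0:ℝ) D) volume := by
        rw [uIcc_of_le hD.le, integrableOn_Icc_iff_integrableOn_Ioc]
        exact (intervalIntegrable_iff_integrableOn_Ioc_of_le hD.le).1 hintR
      exact ((continuousOn_primitive_interval hio) D right_mem_uIcc).mono hIoosub
    have t2 : Filter.Tendsto (fun d => ∫ x in (0:ℝ)..d, fa x) (nhdsWithin D (Ioo 0 D))
        (nhds (∫ x in (0:ℝ)..D, fa x)) := by
      have hio : IntegrableOn fa (uIcc (0:ℝ) D) volume := by
        rw [uIcc_of_le hD.le, integrableOn_Icc_iff_integrableOn_Ioc]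
        exact (intervalIntegrable_iff_integrableOn_Ioc_of_le hD.le).1 hfaR
      exact ((continuousOn_primitive_interval hio) D right_mem_uIcc).mono hIoosub
    have t3 : Filter.Tendsto B (nhdsWithin D (Ioo 0 D)) (nhds (B D)) :=
      (hBc D (right_mem_Icc.2 hDD.le)).mono
        (fun x hx => ⟨by linarith [hx.1], hx.2.le⟩)
    have tA : Filter.Tendsto (fun d => (a-1) * (∫ x in (0:ℝ)..d, h x)
        - (lam - K*s) * (∫ x in (0:ℝ)..d, fa x)) (nhdsWithin D (Ioo 0 D))
        (nhds ((a-1) * (∫ x in (0:ℝ)..D, h x) - (lam - K*s) * (∫ x in (0:ℝ)..D, fa x))) :=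
      ((t1.const_mul _).sub (t2.const_mul _))
    have tB : Filter.Tendsto (fun d => (a-1) * (∫ x in (0:ℝ)..d, h x)
        - (lam - K*s) * (∫ x in (0:ℝ)..d, fa x)) (nhdsWithin D (Ioo 0 D))
        (nhds (B D - B 0)) := by
      refine Filter.Tendsto.congr' ?_ (t3.sub tendsto_const_nhds)
      filter_upwards [self_mem_nhdsWithin] with d hd
      exact (key 0 h0mem d ⟨by linarith [hd.1], hd.2⟩).symm
    have := tendsto_nhds_unique tA tB
    rw [hBr, zero_sub] at this
    exact this
  have hsplit1 : (∫ x in (-D)..0, h x) + (∫ x in (0:ℝ)..D, h x) = ∫ x in (-D)..D, h x :=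
    intervalIntegral.integral_add_adjacent_intervals hintL hintR
  have hsplit2 : (∫ x in (-D)..0, fa x) + (∫ x in (0:ℝ)..D, fa x) = ∫ x in (-D)..D, fa x :=
    intervalIntegral.integral_add_adjacent_intervals hfaL hfaR
  have : (a-1) * (∫ x in (-D)..D, h x) - (lam - K*s) * (∫ x in (-D)..D, fa x) = 0 := by
    rw [← hsplit1, ← hsplit2]
    linarith [hLeft, hRight]
  have efh : (∫ x in (-D)..D, f x ^ (a-2) * g1 x ^ 2) = ∫ x in (-D)..D, h x := rfl
  have efa : (∫ x in (-D)..D, f x ^ a) = ∫ x in (-D)..D, fa x := rfl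
  rw [efh, efa]
  linarith [this]

private lemma aux_final (K D lam a s : ℝ) (hD : 0 < D) (ha : 1 < a) (hs : s = 1 - 1 / a)
    (f g1 : ℝ → ℝ)
    (hpos : ∀ x ∈ Ioo (-D) D, 0 < f x)
    (hf0 : ∀ x ∈ Icc (-D) D, 0 ≤ f x)
    (hderiv1 : ∀ x ∈ Ioo (-D) D, HasDerivAt f (g1 x) x)
    (hkey : (a-1) * ∫ x in (-D)..D, f x ^ (a-2) * g1 x ^ 2
      = (lam - K*s) * ∫ x in (-D)..D, f x ^ a) :
    4 * s * (1 - s) * ∫ x in (-D)..D, (deriv (fun y => f y ^ (a / 2)) x) ^ 2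
      = (lam - K * s) * ∫ x in (-D)..D, (f x ^ (a / 2)) ^ 2 := by
  have hDD : -D < D := by linarith
  have ham : a ≠ 0 := by linarith
  have eL : (∫ x in (-D)..D, (deriv (fun y => f y ^ (a / 2)) x) ^ 2)
      = ∫ x in (-D)..D, a^2/4 * (f x ^ (a-2) * g1 x ^ 2) := by
    apply intervalIntegral.integral_congr_ae
    have hae : ∀ᵐ x : ℝ, x ≠ D := by
      rw [MeasureTheory.ae_iff]
      have : {x : ℝ | ¬x ≠ D} = {D} := by ext y; simp [not_not]
      rw [this]
      exact measure_singleton D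
    filter_upwards [hae] with x hx hmem
    rw [uIoc_of_le hDD.le] at hmem
    have hxI : x ∈ Ioo (-D) D := ⟨hmem.1, lt_of_le_of_ne hmem.2 hx⟩
    have hF : 0 < f x := hpos x hxI
    have hd : HasDerivAt (fun y => f y ^ (a/2)) (g1 x * (a/2) * f x ^ (a/2 - 1)) x :=
      (hderiv1 x hxI).rpow_const (Or.inl hF.ne')
    rw [hd.deriv]
    have e : f x ^ (a/2-1) * f x ^ (a/2-1) = f x ^ (a-2) := by
      rw [← Real.rpow_add hF]; congr 1; ring
    rw [mul_pow, mul_pow, sq (f x ^ (a/2-1)), e]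
    ring
  have eR : (∫ x in (-D)..D, (f x ^ (a / 2)) ^ 2) = ∫ x in (-D)..D, f x ^ a := by
    apply intervalIntegral.integral_congr
    intro x hx
    rw [uIcc_of_le hDD.le] at hx
    have h0 : 0 ≤ f x := hf0 x hx
    show (f x ^ (a/2)) ^ 2 = f x ^ a
    rw [sq, ← Real.rpow_add' h0 (by rw [show a/2 + a/2 = a by ring]; exact ham)]
    congr 1; ring
  rw [eL, eR, intervalIntegral.integral_const_mul]
  have e : 4*s*(1-s) * (a^2/4) = a - 1 := by
    rw [hs]; field_simp; ring
  linear_combination hkey + (∫ x in (-D)..D, f x ^ (a-2) * g1 x ^ 2) * e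

/-- Rayleigh-quotient identity for the power `u = f^{a/2}` of the first Dirichlet
eigenfunction `f` of `L = d²/dx² - Kx d/dx` with eigenvalue `λ - K`:
`4s(1-s) ∫ u'² = (λ - Ks) ∫ u²` where `s = 1 - 1/a`. -/
theorem stmt_3 (K D lam a s : ℝ) (hD : 0 < D) (ha : 1 < a) (hs : s = 1 - 1 / a)
    (f : ℝ → ℝ) (hf : ContDiffOn ℝ 2 f (Icc (-D) D))
    (hbl : f (-D) = 0) (hbr : f D = 0)
    (hpos : ∀ x ∈ Ioo (-D) D, 0 < f x)
    (heig : ∀ x ∈ Icc (-D) D,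
      deriv (deriv f) x - K * x * deriv f x = -(lam - K) * f x) :
    4 * s * (1 - s) * ∫ x in (-D)..D, (deriv (fun y => f y ^ (a / 2)) x) ^ 2
      = (lam - K * s) * ∫ x in (-D)..D, (f x ^ (a / 2)) ^ 2 := by
  have hDD : -D < D := by linarith
  have hU : UniqueDiffOn ℝ (Icc (-D) D) := uniqueDiffOn_Icc hDD
  set g1 : ℝ → ℝ := derivWithin f (Icc (-D) D) with hg1
  set g2 : ℝ → ℝ := derivWithin g1 (Icc (-D) D) with hg2
  have hfc : ContinuousOn f (Icc (-D) D) := hf.continuousOn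
  have hfd : DifferentiableOn ℝ f (Icc (-D) D) := hf.differentiableOn (by norm_num)
  have hg1cd : ContDiffOn ℝ 1 g1 (Icc (-D) D) := hf.derivWithin hU (by norm_num)
  have hg1c : ContinuousOn g1 (Icc (-D) D) := hg1cd.continuousOn
  have hg1d : DifferentiableOn ℝ g1 (Icc (-D) D) := hg1cd.differentiableOn one_ne_zero
  have hg2c : ContinuousOn g2 (Icc (-D) D) := hg1cd.continuousOn_derivWithin hU le_rfl
  have hmem : ∀ x ∈ Ioo (-D) D, Icc (-D) D ∈ nhds x := fun x hx => Icc_mem_nhds hx.1 hx.2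
  have hderiv1 : ∀ x ∈ Ioo (-D) D, HasDerivAt f (g1 x) x := by
    intro x hx
    have h1 : DifferentiableAt ℝ f x :=
      (hfd x (Ioo_subset_Icc_self hx)).differentiableAt (hmem x hx)
    have h2 : g1 x = deriv f x := derivWithin_of_mem_nhds (hmem x hx)
    rw [h2]; exact h1.hasDerivAt
  have hderiv2 : ∀ x ∈ Ioo (-D) D, HasDerivAt g1 (g2 x) x := by
    intro x hx
    have h1 : DifferentiableAt ℝ g1 x :=
      (hg1d x (Ioo_subset_Icc_self hx)).differentiableAt (hmem x hx)
    have h2 : g2 x = deriv g1 x := derivWithin_of_mem_nhds (hmem x hx)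
    rw [h2]; exact h1.hasDerivAt
  have heig' : ∀ x ∈ Ioo (-D) D, g2 x = K * x * g1 x - (lam - K) * f x := by
    intro x hx
    have h2 : g1 x = deriv f x := derivWithin_of_mem_nhds (hmem x hx)
    have h3 : deriv f =ᶠ[nhds x] g1 := by
      filter_upwards [isOpen_Ioo.mem_nhds hx] with y hy
      exact (derivWithin_of_mem_nhds (hmem y hy)).symm
    have h4 : g2 x = deriv (deriv f) x := by
      rw [hg2, derivWithin_of_mem_nhds (hmem x hx)]
      exact (Filter.EventuallyEq.deriv_eq h3).symm
    have h5 := heig x (Ioo_subset_Icc_self hx)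
    rw [← h2, ← h4] at h5
    linarith
  have hf0 : ∀ x ∈ Icc (-D) D, 0 ≤ f x := by
    intro x hx
    rcases eq_or_lt_of_le hx.1 with h | h
    · rw [← h, hbl]
    · rcases eq_or_lt_of_le hx.2 with h' | h'
      · rw [h', hbr]
      · exact (hpos x ⟨h, h'⟩).le
  obtain ⟨hg1l, hg1r⟩ := aux_sign K D lam hD f hbl hbr hpos g1 g2 hfc hfd hg1 hg1c
    hderiv1 hderiv2 heig' hf0
  obtain ⟨⟨δ₁, hδ₁, hδ₁D, hlow₁⟩, ⟨δ₂, hδ₂, hδ₂D, hlow₂⟩⟩ :=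
    aux_low D hD f g1 hbl hbr hfc hg1c hderiv1 hg1l hg1r
  have hint : IntervalIntegrable (fun x => f x ^ (a-2) * g1 x ^ 2) volume (-D) D :=
    aux_intg D a hD ha f g1 hfc hg1c hpos hbr hf0 δ₁ δ₂ (g1 (-D)/2) (-g1 D/2)
      hδ₁ hδ₁D hδ₂ hδ₂D (by linarith) (by linarith) hlow₁ hlow₂
  have hkey := aux_main K D lam a s hD ha hs f g1 g2 hbl hbr hpos hfc hg1c hg2c
    hderiv1 hderiv2 heig' hint
  exact aux_final K D lam a s hD ha hs f g1 hpos hf0 hderiv1 hkey
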